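/- In the setting of the quantum principal homogeneous space (both factors of type X̃): assume additionally the determinant relations t₂₂t₁₁ − q·t₂₁t₁₂ = 1 and τ₁₁τ₂₂ − q·τ₁₂τ₂₁ = 1. Then the elements k₁₁, k₁₂, k₂₁, k₂₂ satisfy: k₁₁k₁₂ = q⁻¹k₁₂k₁₁, k₂₁k₂₂ = q⁻¹k₂₂k₂₁, k₁₁k₂₁ = q⁻¹k₂₁k₁₁, k₁₂k₂₂ = q⁻¹k₂₂k₁₂, k₁₂k₂₁ = k₂₁k₁₂, k₁₁k₂₂ − k₂₂k₁₁ = (q⁻¹ − q)k₁₂k₂₁, and k₂₂k₁₁ − q·k₁₂k₂₁ = 1. -/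
import Mathlib

private lemma ra {A : Type*} [Ring A] {a b c : A} (h : a * b = c) (x : A) :
    a * (b * x) = c * x := by rw [← mul_assoc, h]


/-- **Commutation relations for the invariant kernels, case `Y₁ = Y₂ = X̃`.**
In a unital ℂ-algebra containing a copy of the opposite quantum `SL₂` (the
`t`'s) and of quantum `SL₂` (the `τ`'s), mutually commuting, and satisfying
the determinant relations `t₂₂t₁₁ - q t₂₁t₁₂ = 1`, `τ₁₁τ₂₂ - q τ₁₂τ₂₁ = 1`,
the kernels `k₁₁ = t₁₁τ₂₂ - q t₁₂τ₂₁`, `k₁₂ = -q⁻¹t₁₁τ₁₂ + t₁₂τ₁₁`,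
`k₂₁ = t₂₁τ₂₂ - q t₂₂τ₂₁`, `k₂₂ = -q⁻¹t₂₁τ₁₂ + t₂₂τ₁₁` satisfy the quantum
`SL₂` relations with `q` replaced by `q⁻¹`, with quantum determinant
`k₂₂k₁₁ - q k₁₂k₂₁ = 1`. -/
theorem kernel_relations_XX
    {A : Type*} [Ring A] [Algebra ℂ A] (q : ℝ) (hq0 : 0 < q) (hq1 : q < 1)
    (t₁₁ t₁₂ t₂₁ t₂₂ τ₁₁ τ₁₂ τ₂₁ τ₂₂ : A)
    -- (i) every tᵢⱼ commutes with every τₖₗ: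
    (hcomm : ∀ s ∈ ({t₁₁, t₁₂, t₂₁, t₂₂} : Set A),
      ∀ σ ∈ ({τ₁₁, τ₁₂, τ₂₁, τ₂₂} : Set A), s * σ = σ * s)
    -- (ii) the τ's satisfy the quantum SL₂ relations:
    (hτ1 : τ₁₁ * τ₁₂ = (q : ℂ) • (τ₁₂ * τ₁₁)) (hτ2 : τ₂₁ * τ₂₂ = (q : ℂ) • (τ₂₂ * τ₂₁))
    (hτ3 : τ₁₁ * τ₂₁ = (q : ℂ) • (τ₂₁ * τ₁₁)) (hτ4 : τ₁₂ * τ₂₂ = (q : ℂ) • (τ₂₂ * τ₁₂))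
    (hτ5 : τ₁₂ * τ₂₁ = τ₂₁ * τ₁₂)
    (hτ6 : τ₁₁ * τ₂₂ - τ₂₂ * τ₁₁ = ((q : ℂ) - (q : ℂ)⁻¹) • (τ₁₂ * τ₂₁))
    -- (iii) the t's satisfy the opposite quantum SL₂ relations:
    (ht1 : t₁₂ * t₁₁ = (q : ℂ) • (t₁₁ * t₁₂)) (ht2 : t₂₂ * t₂₁ = (q : ℂ) • (t₂₁ * t₂₂))
    (ht3 : t₂₁ * t₁₁ = (q : ℂ) • (t₁₁ * t₂₁)) (ht4 : t₂₂ * t₁₂ = (q : ℂ) • (t₁₂ * t₂₂))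
    (ht5 : t₂₁ * t₁₂ = t₁₂ * t₂₁)
    (ht6 : t₂₂ * t₁₁ - t₁₁ * t₂₂ = ((q : ℂ) - (q : ℂ)⁻¹) • (t₂₁ * t₁₂))
    -- determinant relations:
    (hdet_t : t₂₂ * t₁₁ - (q : ℂ) • (t₂₁ * t₁₂) = 1)
    (hdet_τ : τ₁₁ * τ₂₂ - (q : ℂ) • (τ₁₂ * τ₂₁) = 1)
    -- the invariant kernels:
    (k₁₁ k₁₂ k₂₁ k₂₂ : A)
    (hk11 : k₁₁ = t₁₁ * τ₂₂ - (q : ℂ) • (t₁₂ * τ₂₁))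
    (hk12 : k₁₂ = -(q : ℂ)⁻¹ • (t₁₁ * τ₁₂) + t₁₂ * τ₁₁)
    (hk21 : k₂₁ = t₂₁ * τ₂₂ - (q : ℂ) • (t₂₂ * τ₂₁))
    (hk22 : k₂₂ = -(q : ℂ)⁻¹ • (t₂₁ * τ₁₂) + t₂₂ * τ₁₁) :
    k₁₁ * k₁₂ = (q : ℂ)⁻¹ • (k₁₂ * k₁₁) ∧
    k₂₁ * k₂₂ = (q : ℂ)⁻¹ • (k₂₂ * k₂₁) ∧
    k₁₁ * k₂₁ = (q : ℂ)⁻¹ • (k₂₁ * k₁₁) ∧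
    k₁₂ * k₂₂ = (q : ℂ)⁻¹ • (k₂₂ * k₁₂) ∧
    k₁₂ * k₂₁ = k₂₁ * k₁₂ ∧
    k₁₁ * k₂₂ - k₂₂ * k₁₁ = ((q : ℂ)⁻¹ - (q : ℂ)) • (k₁₂ * k₂₁) ∧
    k₂₂ * k₁₁ - (q : ℂ) • (k₁₂ * k₂₁) = 1 := by
  have hc : (q : ℂ) ≠ 0 := by
    simpa using Complex.ofReal_ne_zero.mpr hq0.ne'
  have hc00 : τ₁₁ * t₁₁ = t₁₁ * τ₁₁ := (hcomm t₁₁ (by simp) τ₁₁ (by simp)).symm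
  have hc01 : τ₁₂ * t₁₁ = t₁₁ * τ₁₂ := (hcomm t₁₁ (by simp) τ₁₂ (by simp)).symm
  have hc02 : τ₂₁ * t₁₁ = t₁₁ * τ₂₁ := (hcomm t₁₁ (by simp) τ₂₁ (by simp)).symm
  have hc03 : τ₂₂ * t₁₁ = t₁₁ * τ₂₂ := (hcomm t₁₁ (by simp) τ₂₂ (by simp)).symm
  have hc10 : τ₁₁ * t₁₂ = t₁₂ * τ₁₁ := (hcomm t₁₂ (by simp) τ₁₁ (by simp)).symm
  have hc11 : τ₁₂ * t₁₂ = t₁₂ * τ₁₂ := (hcomm t₁₂ (by simp) τ₁₂ (by simp)).symm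
  have hc12 : τ₂₁ * t₁₂ = t₁₂ * τ₂₁ := (hcomm t₁₂ (by simp) τ₂₁ (by simp)).symm
  have hc13 : τ₂₂ * t₁₂ = t₁₂ * τ₂₂ := (hcomm t₁₂ (by simp) τ₂₂ (by simp)).symm
  have hc20 : τ₁₁ * t₂₁ = t₂₁ * τ₁₁ := (hcomm t₂₁ (by simp) τ₁₁ (by simp)).symm
  have hc21 : τ₁₂ * t₂₁ = t₂₁ * τ₁₂ := (hcomm t₂₁ (by simp) τ₁₂ (by simp)).symm
  have hc22 : τ₂₁ * t₂₁ = t₂₁ * τ₂₁ := (hcomm t₂₁ (by simp) τ₂₁ (by simp)).symm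
  have hc23 : τ₂₂ * t₂₁ = t₂₁ * τ₂₂ := (hcomm t₂₁ (by simp) τ₂₂ (by simp)).symm
  have hc30 : τ₁₁ * t₂₂ = t₂₂ * τ₁₁ := (hcomm t₂₂ (by simp) τ₁₁ (by simp)).symm
  have hc31 : τ₁₂ * t₂₂ = t₂₂ * τ₁₂ := (hcomm t₂₂ (by simp) τ₁₂ (by simp)).symm
  have hc32 : τ₂₁ * t₂₂ = t₂₂ * τ₂₁ := (hcomm t₂₂ (by simp) τ₂₁ (by simp)).symm
  have hc33 : τ₂₂ * t₂₂ = t₂₂ * τ₂₂ := (hcomm t₂₂ (by simp) τ₂₂ (by simp)).symm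
  have hτ5' : τ₂₁ * τ₁₂ = τ₁₂ * τ₂₁ := hτ5.symm
  have hτd1 : τ₁₁ * τ₂₂ = 1 + (q : ℂ) • (τ₁₂ * τ₂₁) := eq_add_of_sub_eq hdet_τ
  have hτd2 : τ₂₂ * τ₁₁ = 1 + (q : ℂ)⁻¹ • (τ₁₂ * τ₂₁) := by
    have h := hτ6; rw [hτd1] at h
    have h2 : τ₂₂ * τ₁₁ =
        1 + (q : ℂ) • (τ₁₂ * τ₂₁) - ((q : ℂ) - (q : ℂ)⁻¹) • (τ₁₂ * τ₂₁) := by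
      rw [← h]; abel
    rw [h2]; module
  have htd1 : t₂₂ * t₁₁ = 1 + (q : ℂ) • (t₁₂ * t₂₁) := by
    have h := hdet_t; rw [ht5] at h; exact eq_add_of_sub_eq h
  have htd2 : t₁₁ * t₂₂ = 1 + (q : ℂ)⁻¹ • (t₁₂ * t₂₁) := by
    have h := ht6; rw [htd1, ht5] at h
    have h2 : t₁₁ * t₂₂ =
        1 + (q : ℂ) • (t₁₂ * t₂₁) - ((q : ℂ) - (q : ℂ)⁻¹) • (t₁₂ * t₂₁) := by
      rw [← h]; abel
    rw [h2]; module
  subst hk11 hk12 hk21 hk22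
  refine ⟨?_, ?_, ?_, ?_, ?_, ?_, ?_⟩ <;>
  · simp only [sub_mul, mul_sub, add_mul, mul_add, neg_mul, mul_neg, neg_smul,
      smul_mul_assoc, mul_smul_comm, smul_smul, smul_add, smul_sub, smul_neg,
      mul_one, one_mul, mul_assoc,
      hc00, hc01, hc02, hc03, hc10, hc11, hc12, hc13,
      hc20, hc21, hc22, hc23, hc30, hc31, hc32, hc33,
      ra hc00, ra hc01, ra hc02, ra hc03, ra hc10, ra hc11, ra hc12, ra hc13,
      ra hc20, ra hc21, ra hc22, ra hc23, ra hc30, ra hc31, ra hc32, ra hc33,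
      hτ1, hτ2, hτ3, hτ4, hτ5', hτd1, hτd2,
      ra hτ1, ra hτ2, ra hτ3, ra hτ4, ra hτ5', ra hτd1, ra hτd2,
      ht1, ht2, ht3, ht4, ht5, htd1, htd2,
      ra ht1, ra ht2, ra ht3, ra ht4, ra ht5, ra htd1, ra htd2]
    match_scalars <;> field_simp <;> ring
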